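/- Let N ≥ 2 and η_α = exp(2πiα/N) for α = 1,…,N-1 (the nontrivial N-th roots of unity). For every integer m with 1 ≤ m ≤ N, one has ∑_{α=1}^{N-1} η_α^m/(η_α - 1) = (N+1)/2 - m. -/

import Mathlib

open Finset Complex

noncomputable def η (N α : ℕ) : ℂ := Complex.exp (2 * Real.pi * Complex.I * α / N)

lemma eta_ne_zero (N α : ℕ) : η N α ≠ 0 := Complex.exp_ne_zero _

lemma eta_pow (N α k : ℕ) : η N α ^ k = Complex.exp (2 * Real.pi * Complex.I * (α * k) / N) := by
  rw [η, ← Complex.exp_nat_mul]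
  congr 1
  ring

lemma eta_pow_N (N α : ℕ) (hN : 0 < N) : η N α ^ N = 1 := by
  rw [eta_pow]
  have hN' : (N : ℂ) ≠ 0 := by exact_mod_cast hN.ne'
  have : (2 * Real.pi * Complex.I * (α * N) / N : ℂ) = (α : ℤ) * (2 * Real.pi * Complex.I) := by
    field_simp
    push_cast; ring
  rw [this, Complex.exp_int_mul_two_pi_mul_I]

lemma eta_ne_one (N α : ℕ) (h1 : 1 ≤ α) (h2 : α < N) : η N α ≠ 1 := by
  rw [η]
  intro hone
  rw [Complex.exp_eq_one_iff] at hone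
  obtain ⟨n, hn⟩ := hone
  have hN' : (N : ℂ) ≠ 0 := by
    exact_mod_cast (by omega : N ≠ 0)
  have hpi : (2 * Real.pi * Complex.I : ℂ) ≠ 0 := by
    simp [Real.pi_ne_zero, Complex.I_ne_zero]
  have hα : (α : ℂ) = (n * N : ℤ) := by
    have : (2 * Real.pi * Complex.I) * (α : ℂ) = (2 * Real.pi * Complex.I) * ((n : ℂ) * N) := by
      field_simp at hn
      linear_combination (2 * (Real.pi : ℂ) * Complex.I) * hn
    have := mul_left_cancel₀ hpi this
    push_cast
    linear_combination this
  have hαz : (α : ℤ) = n * N := by exact_mod_cast hα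
  have h1' : (1 : ℤ) ≤ α := by exact_mod_cast h1
  have h2' : (α : ℤ) < N := by exact_mod_cast h2
  rcases le_or_gt n 0 with h | h
  · nlinarith
  · nlinarith

lemma eta_mul (N α : ℕ) (hα : α ≤ N) (hN : 0 < N) : η N α * η N (N - α) = 1 := by
  rw [η, η, ← Complex.exp_add]
  have hN' : (N : ℂ) ≠ 0 := by exact_mod_cast hN.ne'
  have hc : ((N - α : ℕ) : ℂ) = (N : ℂ) - α := by
    push_cast [Nat.cast_sub hα]
    ring
  rw [hc]
  have : 2 * (Real.pi : ℂ) * Complex.I * α / N + 2 * Real.pi * Complex.I * ((N : ℂ) - α) / N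
      = 2 * Real.pi * Complex.I := by
    field_simp
    ring
  rw [this, Complex.exp_two_pi_mul_I]

lemma sum_eta_pow (N k : ℕ) (hN : 2 ≤ N) (hk1 : 1 ≤ k) (hk2 : k ≤ N - 1) :
    ∑ α ∈ Icc 1 (N - 1), η N α ^ k = -1 := by
  have hIcc : Icc 1 (N - 1) = Ico 1 N := by
    ext x
    simp only [mem_Icc, mem_Ico]
    omega
  have hz1 : η N k ≠ 1 := eta_ne_one N k hk1 (by omega)
  have key : ∀ α, η N α ^ k = η N k ^ α := by
    intro α
    rw [eta_pow, eta_pow]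
    congr 2
    ring
  have hsum : ∑ α ∈ Finset.range N, η N k ^ α = 0 := by
    rw [geom_sum_eq hz1, eta_pow_N N k (by omega)]
    simp
  have hsplit : (∑ α ∈ Ico 0 1, η N k ^ α) + ∑ α ∈ Ico 1 N, η N k ^ α
      = ∑ α ∈ Ico 0 N, η N k ^ α :=
    Finset.sum_Ico_consecutive _ (by omega) (by omega)
  rw [← Finset.range_eq_Ico, ← Finset.range_eq_Ico, hsum] at hsplit
  have h01 : ∑ α ∈ Finset.range 1, η N k ^ α = 1 := by simp
  rw [hIcc]
  calc ∑ α ∈ Ico 1 N, η N α ^ k = ∑ α ∈ Ico 1 N, η N k ^ α := by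
        exact Finset.sum_congr rfl fun α _ => key α
    _ = -1 := by rw [h01] at hsplit; linear_combination hsplit

lemma sum_inv_eta (N : ℕ) (hN : 2 ≤ N) :
    ∑ α ∈ Icc 1 (N - 1), 1 / (η N α - 1) = -((N : ℂ) - 1) / 2 := by
  set S := ∑ α ∈ Icc 1 (N - 1), 1 / (η N α - 1) with hS
  have hrev : S = ∑ α ∈ Icc 1 (N - 1), 1 / (η N (N - α) - 1) := by
    apply Finset.sum_nbij' (i := fun α => N - α) (j := fun α => N - α)
    · intro a ha; simp only [mem_Icc] at *; omega
    · intro a ha; simp only [mem_Icc] at *; omega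
    · intro a ha; simp only [mem_Icc] at ha; omega
    · intro a ha; simp only [mem_Icc] at ha; omega
    · intro a ha
      simp only [mem_Icc] at ha
      have : N - (N - a) = a := by omega
      rw [this]
  have hterm : ∀ α ∈ Icc 1 (N - 1), 1 / (η N α - 1) + 1 / (η N (N - α) - 1) = -1 := by
    intro α hα
    simp only [mem_Icc] at hα
    have hmul : η N α * η N (N - α) = 1 := eta_mul N α (by omega) (by omega)
    have h1 : η N α - 1 ≠ 0 := sub_ne_zero.mpr (eta_ne_one N α hα.1 (by omega))
    have h2 : η N (N - α) - 1 ≠ 0 := sub_ne_zero.mpr (eta_ne_one N (N - α) (by omega) (by omega))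
    field_simp
    linear_combination hmul
  have h2 : S + S = ∑ α ∈ Icc 1 (N - 1), (1 / (η N α - 1) + 1 / (η N (N - α) - 1)) := by
    rw [Finset.sum_add_distrib, ← hS, ← hrev]
  rw [Finset.sum_congr rfl hterm, Finset.sum_const, Nat.card_Icc] at h2
  have hcard : ((N - 1 + 1 - 1 : ℕ) : ℂ) = (N : ℂ) - 1 := by
    have e : N - 1 + 1 - 1 = N - 1 := by omega
    rw [e, Nat.cast_sub (by omega : 1 ≤ N)]
    norm_num
  rw [nsmul_eq_mul, hcard] at h2
  linear_combination h2 / 2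

theorem stmt_5 (N : ℕ) (hN : 2 ≤ N) (m : ℤ) (hm1 : 1 ≤ m) (hm2 : m ≤ N) :
    ∑ α ∈ Finset.Icc 1 (N - 1), (η N α) ^ m / (η N α - 1) =
      ((N : ℂ) + 1) / 2 - (m : ℂ) := by
  lift m to ℕ using (by linarith) with n
  have hn1 : 1 ≤ n := by exact_mod_cast hm1
  have hn2 : n ≤ N := by exact_mod_cast hm2
  clear hm1 hm2
  simp only [zpow_natCast]
  induction n, hn1 using Nat.le_induction with
  | base =>
    have hterm : ∀ α ∈ Icc 1 (N - 1), η N α ^ 1 / (η N α - 1) = 1 + 1 / (η N α - 1) := by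
      intro α hα
      simp only [mem_Icc] at hα
      have h1 : η N α - 1 ≠ 0 := sub_ne_zero.mpr (eta_ne_one N α hα.1 (by omega))
      field_simp
      ring
    rw [Finset.sum_congr rfl hterm, Finset.sum_add_distrib, Finset.sum_const, sum_inv_eta N hN,
      Nat.card_Icc]
    have : ((N - 1 + 1 - 1 : ℕ) : ℂ) = (N : ℂ) - 1 := by
      have : N - 1 + 1 - 1 = N - 1 := by omega
      rw [this, Nat.cast_sub (by omega : 1 ≤ N)]
      norm_num
    rw [nsmul_eq_mul, this]
    push_cast
    ring
  | succ n hn ih =>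
    have hge : ∑ α ∈ Icc 1 (N - 1), η N α ^ n = -1 := sum_eta_pow N n hN hn (by omega)
    have hterm : ∀ α ∈ Icc 1 (N - 1),
        η N α ^ (n + 1) / (η N α - 1) = η N α ^ n / (η N α - 1) + η N α ^ n := by
      intro α hα
      simp only [mem_Icc] at hα
      have h1 : η N α - 1 ≠ 0 := sub_ne_zero.mpr (eta_ne_one N α hα.1 (by omega))
      field_simp
      ring
    rw [Finset.sum_congr rfl hterm, Finset.sum_add_distrib, ih (by omega), hge]
    push_cast
    ring
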